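/- Let {f_n} = {n e_n} in ℓ² and let L be the densely defined self-adjoint operator determined by L e_n = e_n / n. Then R(L) is not closed, yet {L f_n} = {e_n} is a frame (an orthonormal basis) for ℓ². Hence closedness of R(L*) is not necessary for {L f_n} to be a lower semi-frame. -/

import Mathlib

open scoped ENNReal InnerProductSpace

noncomputable section

/-- The square-sum `∑ₙ |⟨x, fₙ⟩|²` of the analysis coefficients of `x`
against the sequence `f`, valued in `ℝ≥0∞`. -/
def analysisSum {H : Type*} [NormedAddCommGroup H] [InnerProductSpace ℂ H]
    (f : ℕ → H) (x : H) : ℝ≥0∞ :=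
  ∑' n, (‖(⟪x, f n⟫_ℂ : ℂ)‖₊ : ℝ≥0∞) ^ 2

/-- `f` is a lower semi-frame for `H`. -/
def IsLowerSemiFrame {H : Type*} [NormedAddCommGroup H] [InnerProductSpace ℂ H]
    (f : ℕ → H) : Prop :=
  ∃ A : ℝ, 0 < A ∧ ∀ x : H, ENNReal.ofReal (A * ‖x‖ ^ 2) ≤ analysisSum f x

/-- `f` is a frame for `H`. -/
def IsFrame {H : Type*} [NormedAddCommGroup H] [InnerProductSpace ℂ H]
    (f : ℕ → H) : Prop :=
  ∃ A B : ℝ, 0 < A ∧ A ≤ B ∧ ∀ x : H,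
    ENNReal.ofReal (A * ‖x‖ ^ 2) ≤ analysisSum f x ∧
      analysisSum f x ≤ ENNReal.ofReal (B * ‖x‖ ^ 2)

lemma analysisSum_single (x : lp (fun _ : ℕ => ℂ) 2) :
    analysisSum (fun n => lp.single 2 n (1 : ℂ)) x = ENNReal.ofReal (‖x‖ ^ 2) := by
  have hinner : ∀ n, ⟪x, lp.single 2 n (1:ℂ)⟫_ℂ = starRingEnd ℂ (x n) := fun n => by
    rw [lp.inner_single_right]; simp [RCLike.inner_apply]
  have hs : Summable fun n => ‖x n‖ ^ (2:ℕ) := by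
    have := (lp.memℓp x).summable (p := 2) (by norm_num)
    simp only [ENNReal.toReal_ofNat] at this
    exact this.congr fun n => by rw [← Real.rpow_natCast]; norm_num
  have hnorm : ‖x‖ ^ (2:ℕ) = ∑' n, ‖x n‖ ^ (2:ℕ) := by
    have := lp.norm_rpow_eq_tsum (p := 2) (by norm_num) x
    simp only [ENNReal.toReal_ofNat] at this
    rw [← Real.rpow_natCast ‖x‖ 2]
    push_cast
    rw [this]
    exact tsum_congr fun n => by rw [← Real.rpow_natCast]; norm_num
  unfold analysisSum
  rw [hnorm, ENNReal.ofReal_tsum_of_nonneg (fun n => by positivity) hs]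
  refine tsum_congr fun n => ?_
  rw [hinner, ENNReal.ofReal_pow (norm_nonneg _)]
  congr 1
  rw [ofReal_norm, enorm_eq_nnnorm]
  simp

theorem diagonal_image_frame_range_not_closed
    (L : lp (fun _ : ℕ => ℂ) 2 →L[ℂ] lp (fun _ : ℕ => ℂ) 2)
    (hsa : IsSelfAdjoint L)
    (hdiag : ∀ n : ℕ, L (lp.single 2 n (1 : ℂ)) = (((n + 1 : ℕ) : ℂ))⁻¹ • lp.single 2 n (1 : ℂ)) :
    ¬ IsClosed (Set.range L) ∧
      (∀ n : ℕ, L (((n + 1 : ℕ) : ℂ) • lp.single 2 n (1 : ℂ)) = lp.single 2 n (1 : ℂ)) ∧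
      IsFrame (fun n => L (((n + 1 : ℕ) : ℂ) • lp.single 2 n (1 : ℂ))) ∧
      IsLowerSemiFrame (fun n => L (((n + 1 : ℕ) : ℂ) • lp.single 2 n (1 : ℂ))) := by
  have hne : ∀ n : ℕ, ((n + 1 : ℕ) : ℂ) ≠ 0 := fun n => Nat.cast_ne_zero.2 (Nat.succ_ne_zero n)
  -- Part 2
  have h2 : ∀ n : ℕ, L (((n + 1 : ℕ) : ℂ) • lp.single 2 n (1 : ℂ)) = lp.single 2 n (1 : ℂ) := by
    intro n
    rw [map_smul, hdiag, smul_smul, mul_inv_cancel₀ (hne n), one_smul]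
  -- Part 3 : frame with A = B = 1
  have hAS : ∀ x, analysisSum (fun n => L (((n + 1 : ℕ) : ℂ) • lp.single 2 n (1 : ℂ))) x
      = ENNReal.ofReal (‖x‖ ^ 2) := by
    intro x
    have : (fun n => L (((n + 1 : ℕ) : ℂ) • lp.single 2 n (1 : ℂ)))
        = fun n => lp.single 2 n (1 : ℂ) := funext h2
    rw [this, analysisSum_single]
  have h3 : IsFrame (fun n => L (((n + 1 : ℕ) : ℂ) • lp.single 2 n (1 : ℂ))) := by
    refine ⟨1, 1, one_pos, le_refl _, fun x => ?_⟩
    rw [hAS x, one_mul]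
    exact ⟨le_refl _, le_refl _⟩
  have h4 : IsLowerSemiFrame (fun n => L (((n + 1 : ℕ) : ℂ) • lp.single 2 n (1 : ℂ))) := by
    refine ⟨1, one_pos, fun x => ?_⟩
    rw [hAS x, one_mul]
  refine ⟨?_, h2, h3, h4⟩
  -- Part 1 : range not closed
  -- the element x with coordinates 1/(n+1)
  set g : ∀ _ : ℕ, ℂ := fun n => (((n + 1 : ℕ) : ℂ))⁻¹ with hg
  have hgmem : Memℓp g 2 := by
    apply memℓp_gen
    simp only [ENNReal.toReal_ofNat]
    have hsum : Summable fun n : ℕ => ((n:ℝ) + 1)⁻¹ ^ (2:ℕ) := by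
      have h := Real.summable_one_div_nat_pow.2 (show 1 < 2 by norm_num)
      have := (summable_nat_add_iff 1).2 h
      exact this.congr fun n => by rw [one_div, ← inv_pow]; push_cast; ring
    refine hsum.congr fun n => ?_
    have hnorm : ‖g n‖ = ((n:ℝ) + 1)⁻¹ := by
      rw [hg]
      simp only [norm_inv, Complex.norm_natCast]
      push_cast; ring
    rw [show (2:ℝ) = ((2:ℕ):ℝ) by norm_num, Real.rpow_natCast, hnorm]
  set x : lp (fun _ : ℕ => ℂ) 2 := ⟨g, hgmem⟩ with hx
  have hxapp : ∀ n, x n = (((n + 1 : ℕ) : ℂ))⁻¹ := fun n => rfl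
  intro hclosed
  -- x is in the closure of the range
  have hsum : HasSum (fun n => lp.single 2 n (x n)) x := lp.hasSum_single (by norm_num) x
  have hterm : ∀ n, lp.single 2 n (x n) = L (lp.single 2 n (1:ℂ)) := by
    intro n
    rw [hdiag, hxapp]
    have h1 : lp.single (E := fun _ : ℕ => ℂ) 2 n ((((n + 1 : ℕ) : ℂ))⁻¹)
        = lp.single 2 n ((((n + 1 : ℕ) : ℂ))⁻¹ • (1:ℂ)) := by norm_num
    rw [h1, lp.single_smul]
  rw [funext hterm] at hsum
  have hmemcl : x ∈ closure (Set.range L) := by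
    refine mem_closure_of_tendsto hsum (Filter.Eventually.of_forall fun s => ?_)
    rw [← map_sum]
    exact Set.mem_range_self _
  have hxr : x ∈ Set.range L := hclosed.closure_subset hmemcl
  obtain ⟨y, hy⟩ := hxr
  -- compute L y coordinatewise
  set z : ∀ _ : ℕ, ℂ := fun m => (((m + 1 : ℕ) : ℂ))⁻¹ * y m with hz
  have hzmem : Memℓp z 2 := by
    apply memℓp_gen
    simp only [ENNReal.toReal_ofNat]
    have hy2 := (lp.memℓp y).summable (p := 2) (by norm_num)
    simp only [ENNReal.toReal_ofNat] at hy2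
    refine Summable.of_nonneg_of_le (fun m => by positivity) (fun m => ?_) hy2
    have h1 : ‖z m‖ ≤ ‖y m‖ := by
      rw [hz]
      simp only [norm_mul, norm_inv]
      have : ‖((m + 1 : ℕ) : ℂ)‖ = ((m:ℝ) + 1) := by
        rw [Complex.norm_natCast]; push_cast; ring
      rw [this]
      calc ((m:ℝ) + 1)⁻¹ * ‖y m‖ ≤ 1 * ‖y m‖ := by
            apply mul_le_mul_of_nonneg_right _ (norm_nonneg _)
            rw [inv_le_one_iff₀]; right
            linarith [show (0:ℝ) ≤ (m:ℝ) from Nat.cast_nonneg m]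
        _ = ‖y m‖ := one_mul _
    calc ‖z m‖ ^ (2:ℝ) ≤ ‖y m‖ ^ (2:ℝ) :=
          Real.rpow_le_rpow (norm_nonneg _) h1 (by norm_num)
      _ = _ := rfl
  set zl : lp (fun _ : ℕ => ℂ) 2 := ⟨z, hzmem⟩ with hzl
  have hzsum : HasSum (fun m => lp.single 2 m (zl m)) zl := lp.hasSum_single (by norm_num) zl
  have hysum : HasSum (fun m => lp.single 2 m (y m)) y := lp.hasSum_single (by norm_num) y
  have hLysum : HasSum (fun m => L (lp.single 2 m (y m))) (L y) := L.hasSum hysum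
  have hterm2 : ∀ m, L (lp.single 2 m (y m)) = lp.single 2 m (zl m) := by
    intro m
    have h1 : lp.single (E := fun _ : ℕ => ℂ) 2 m (y m)
        = lp.single 2 m (y m • (1:ℂ)) := by norm_num
    rw [h1, lp.single_smul, map_smul, hdiag, smul_smul]
    have h2' : lp.single (E := fun _ : ℕ => ℂ) 2 m (zl m)
        = lp.single 2 m ((y m * (((m + 1 : ℕ) : ℂ))⁻¹) • (1:ℂ)) := by
      congr 1
      show z m = _
      rw [hz]; simp [mul_comm]
    rw [h2', lp.single_smul]
  rw [funext hterm2] at hLysum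
  have hLyz : L y = zl := hLysum.unique hzsum
  -- so x = zl, giving y m = 1 for all m
  have hyx : ∀ m : ℕ, y m = 1 := by
    intro m
    have hcoord : x m = zl m := by rw [← hy, hLyz]
    rw [hxapp] at hcoord
    have h1 : (((m + 1 : ℕ) : ℂ))⁻¹ * 1 = (((m + 1 : ℕ) : ℂ))⁻¹ * y m := by
      rw [mul_one]; exact hcoord
    exact (mul_left_cancel₀ (inv_ne_zero (hne m)) h1).symm
  -- contradiction with square-summability of y
  have hy2 := (lp.memℓp y).summable (p := 2) (by norm_num)
  have : Summable fun _ : ℕ => (1:ℝ) := by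
    refine hy2.congr fun m => ?_
    rw [hyx m]
    simp
  have htend := this.tendsto_atTop_zero
  exact one_ne_zero (tendsto_nhds_unique tendsto_const_nhds htend)
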